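/- Let q be a prime power (not necessarily prime) with q ≡ 3 (mod 4) and q > 3. Then the polynomial F(X) = X^{q+(q−1)/2} + X^{q−1} + X^{(q−3)/2} + 1 ∈ F_q[X] is squarefree, and F(x) is a nonzero square in F_q for every x ∈ F_q (so y² = F(x) is a smooth F_q-maximal hyperelliptic curve over F_q). -/

import Mathlib

open Polynomial

/-- For a prime power `q ≡ 3 (mod 4)`, `q > 3`, the polynomial
`X^{q+(q−1)/2} + X^{q−1} + X^{(q−3)/2} + 1 ∈ F_q[X]` is squarefree and all its values on `F_q`
are nonzero squares. -/
theorem stmt_11 (K : Type*) [Field K] [Fintype K]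
    (q : ℕ) (hq : Fintype.card K = q) (hmod : q % 4 = 3) (hq3 : 3 < q) :
    Squarefree ((X : Polynomial K) ^ (q + (q - 1) / 2)
        + X ^ (q - 1) + X ^ ((q - 3) / 2) + 1) ∧
    ∀ x : K, ∃ y : K, y ≠ 0 ∧
      ((X : Polynomial K) ^ (q + (q - 1) / 2)
          + X ^ (q - 1) + X ^ ((q - 3) / 2) + 1).eval x = y ^ 2 := by
  constructor
  · -- Squarefree part
      classical
      have hm : q = 2 * ((q-1)/2) + 1 := by omega
      set m := (q-1)/2 with hmdef
      have he1 : q + (q-1)/2 = 3*m+1 := by omega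
      have he2 : q - 1 = 2*m := by omega
      have he3 : (q-3)/2 = m-1 := by omega
      rw [he1, he2, he3]
      have hm3 : 3 ≤ m := by omega
      have hchar2 : ringChar K ≠ 2 := by
        intro h
        have := FiniteField.even_card_of_char_two (F := K) h
        omega
      set F : Polynomial K := X ^ (3*m+1) + X ^ (2*m) + X ^ (m-1) + 1 with hF
      have hF0 : F ≠ 0 := by
        intro h
        have : F.eval 0 = 0 := by rw [h, eval_zero]
        rw [hF] at this
        simp only [eval_add, eval_pow, eval_X, eval_one,
          zero_pow (show 3*m+1 ≠ 0 by omega), zero_pow (show 2*m ≠ 0 by omega),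
          zero_pow (show m-1 ≠ 0 by omega)] at this
        norm_num at this
      apply Polynomial.Separable.squarefree
      rw [Polynomial.separable_def, ← EuclideanDomain.gcd_isUnit_iff]
      by_contra hunit
      set Ω := AlgebraicClosure K
      set φ := algebraMap K Ω with hφ
      set d := EuclideanDomain.gcd F (derivative F) with hd
      have hd0 : d ≠ 0 := by
        intro h
        exact hF0 (EuclideanDomain.gcd_eq_zero_iff.mp h).1
      have hdeg : (d.map φ).degree ≠ 0 := by
        rw [Polynomial.degree_map]
        intro h
        exact hunit (Polynomial.isUnit_iff_degree_eq_zero.mpr h)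
      obtain ⟨α, hα⟩ := IsAlgClosed.exists_root (d.map φ) hdeg
      have hαd : aeval α d = 0 := by
        rwa [aeval_def, eval₂_eq_eval_map]
      have hroot : ∀ g : Polynomial K, d ∣ g → aeval α g = 0 := by
        rintro g ⟨e, rfl⟩
        rw [map_mul, hαd, zero_mul]
      have h1 := hroot F (EuclideanDomain.gcd_dvd_left F (derivative F))
      have h2 := hroot (derivative F) (EuclideanDomain.gcd_dvd_right F (derivative F))
      rw [hF] at h1 h2
      have hder : derivative (X ^ (3*m+1) + X ^ (2*m) + X ^ (m-1) + (1: Polynomial K))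
          = C ((3*m+1 : ℕ) : K) * X ^ (3*m) + C ((2*m : ℕ) : K) * X ^ (2*m-1)
            + C ((m-1 : ℕ) : K) * X ^ (m-2) := by
        rw [derivative_add, derivative_add, derivative_add, derivative_one,
          derivative_X_pow, derivative_X_pow, derivative_X_pow]
        rw [show 3*m+1-1 = 3*m from by omega, show m-1-1 = m-2 from by omega, add_zero]
      rw [hder] at h2
      simp only [map_add, map_mul, map_pow, map_one, aeval_X, aeval_C] at h1 h2
      simp only [map_natCast] at h2
      push_cast [Nat.cast_sub (show 1 ≤ m by omega)] at h2
      -- cast facts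
      have hq0 : ((q : ℕ) : Ω) = 0 := by
        rw [← map_natCast φ, ← hq, FiniteField.cast_card_eq_zero, map_zero]
      have hc : 2*((m:ℕ):Ω) + 1 = 0 := by
        have h' : ((2*m+1 : ℕ) : Ω) = 0 := by rw [← hm]; exact hq0
        push_cast at h'
        rw [← map_natCast φ, Nat.cast_mul, Nat.cast_ofNat, map_mul, map_ofNat, map_natCast] at h'; linear_combination h'
      set c : Ω := ((m:ℕ):Ω) with hcdef
      have hα0 : α ≠ 0 := by
        rintro rfl
        rw [zero_pow (show 3*m+1 ≠ 0 by omega), zero_pow (show 2*m ≠ 0 by omega),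
          zero_pow (show m-1 ≠ 0 by omega)] at h1
        norm_num at h1
      set u : Ω := α ^ m with hu
      have hu0 : u ≠ 0 := pow_ne_zero m hα0
      have p1 : α ^ (3*m+1) = u^3 * α := by
        rw [hu, ← pow_mul, ← pow_succ]; congr 1; omega
      have p2 : α ^ (2*m) = u^2 := by rw [hu, ← pow_mul]; congr 1; omega
      have p3 : α ^ (m-1) * α = u := by
        rw [← pow_succ]; congr 1; omega
      have p4 : α ^ (3*m) = u^3 := by rw [hu, ← pow_mul]; congr 1; omega
      have p5 : α ^ (2*m-1) * α = u^2 := by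
        rw [← pow_succ, show 2*m-1+1 = m*2 by omega, pow_mul]
      have p6 : α ^ (m-2) * α = α ^ (m-1) := by
        rw [← pow_succ]; congr 1; omega
      rw [p1, p2] at h1
      rw [p4] at h2
      have H1 : u^3*α^2 + u^2*α + u + α = 0 := by
        linear_combination α*h1 - p3
      have H2 : (3*c+1)*u^3*α^2 + 2*c*u^2*α + (c-1)*u = 0 := by
        rw [Nat.cast_sub (show 1 ≤ m by omega), Nat.cast_one, ← hcdef] at h2; linear_combination α^2*h2 - 2*c*α*p5 - (c-1)*p3 - (c-1)*α*p6
      have E3 : u^2*α + 2*u - α = 0 := by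
        linear_combination 2*c*H1 - 2*H2 + (2*u^3*α^2 + u^2*α - α)*hc
      have key : u*(α^2 + 3) = 0 := by
        linear_combination H1 + (1 - u*α)*E3
      have hT2 : α^2 + 3 = 0 := by
        rcases mul_eq_zero.mp key with h | h
        · exact absurd h hu0
        · exact h
      have hφ3 : φ (-3 : K) = -3 := by
        rw [map_neg, map_ofNat]
      have hαw : α^2 = φ (-3 : K) := by rw [hφ3]; linear_combination hT2
      have hwne : (-3 : K) ≠ 0 := by
        intro h
        rw [h, map_zero] at hαw
        exact hα0 (sq_eq_zero_iff.mp hαw)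
      have hu4 : u^4 = 1 := by
        calc u^4 = α^(m*4) := by rw [hu, ← pow_mul]
        _ = (α^2)^(2*m) := by rw [← pow_mul, show 2*(2*m) = m*4 from by ring]
        _ = (φ (-3 : K))^(2*m) := by rw [hαw]
        _ = φ ((-3 : K)^(2*m)) := by rw [map_pow]
        _ = φ 1 := by
            rw [← he2, ← hq]
            rw [FiniteField.pow_card_sub_one_eq_one (-3 : K) hwne]
        _ = 1 := map_one φ
      have e1 : 2*u^2 - 6 = 0 := by
        linear_combination (u^2*α + 2*u - α - 4*u)*E3 + (2*u^2 - 2)*hT2 - α^2*hu4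
      have e2 : (32 : Ω) = 0 := by
        linear_combination (-(2*u^2+6))*e1 + 4*hu4
      have h32K : ((32:ℕ) : K) = 0 := by
        apply (algebraMap K Ω).injective
        rw [map_natCast, map_zero]
        exact_mod_cast e2
      have hdvd : ringChar K ∣ 32 := ringChar.dvd h32K
      haveI := ringChar.charP K
      have hp : (ringChar K).Prime := CharP.char_is_prime K (ringChar K)
      have h2' : ringChar K ∣ 2 :=
        hp.dvd_of_dvd_pow (show ringChar K ∣ 2^5 by norm_num; exact hdvd)
      exact hchar2 ((Nat.prime_dvd_prime_iff_eq hp Nat.prime_two).mp h2')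
  · -- values part
      have hm : q = 2 * ((q-1)/2) + 1 := by omega
      set m := (q-1)/2 with hmdef
      have he1 : q + (q-1)/2 = 3*m+1 := by omega
      have he2 : q - 1 = 2*m := by omega
      have he3 : (q-3)/2 = m-1 := by omega
      rw [he1, he2, he3]
      have hmodd : Odd m := by rw [Nat.odd_iff]; omega
      have hm3 : 3 ≤ m := by omega
      have hchar2 : ringChar K ≠ 2 := by
        intro h
        have := FiniteField.even_card_of_char_two (F := K) h
        omega
      have h2K : (1 : K) ≠ -1 := by
        intro h
        have h2 : ((2:ℕ) : K) = 0 := by push_cast; linear_combination h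
        rcases (Nat.dvd_prime Nat.prime_two).mp (ringChar.dvd h2) with h1 | h1
        · exact CharP.ringChar_ne_one h1
        · exact hchar2 h1
      intro x
      simp only [eval_add, eval_pow, eval_X, eval_one]
      rcases eq_or_ne x 0 with rfl | hx
      · refine ⟨1, one_ne_zero, ?_⟩
        rw [zero_pow (show 3*m+1 ≠ 0 by omega), zero_pow (show 2*m ≠ 0 by omega),
          zero_pow (show m-1 ≠ 0 by omega)]
        norm_num
      · have hx2m : x ^ (2*m) = 1 := by
          rw [← he2, ← hq]; exact FiniteField.pow_card_sub_one_eq_one x hx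
        have hu2 : (x^m)^2 = 1 := by rw [← pow_mul, mul_comm]; exact hx2m
        have h31 : x ^ (3*m+1) = x^(2*m) * (x^m * x) := by
          rw [← pow_succ, ← pow_add]; ring_nf
        have hm1x : x ^ (m-1) * x = x^m := by
          rw [← pow_succ]; congr 1; omega
        rcases sq_eq_one_iff.mp hu2 with hu | hu
        · -- x^m = 1 : x is a square, F(x) = (x+1)^2/x
          have hxsq : IsSquare x := by
            rw [FiniteField.isSquare_iff hchar2 hx, hq, show q / 2 = m by omega]
            exact hu
          obtain ⟨s, hs2⟩ := hxsq
          have hs : s ≠ 0 := by rintro rfl; simp at hs2; exact hx hs2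
          have hxne : x ≠ -1 := by
            rintro rfl
            rw [hmodd.neg_one_pow] at hu
            exact h2K hu.symm
          refine ⟨(x+1) * s⁻¹, ?_, ?_⟩
          · exact mul_ne_zero (by intro h; apply hxne; linear_combination h) (inv_ne_zero hs)
          · have hxm1 : x ^ (m-1) = x⁻¹ := by
              field_simp
              rw [hm1x, hu]
            rw [h31, hx2m, hu, hxm1]
            field_simp
            linear_combination (-(x+1)^2) * hs2
        · -- x^m = -1 : -x is a square, F(x) = (x-1)^2/(-x)
          have hxsq : IsSquare (-x) := by
            rw [FiniteField.isSquare_iff hchar2 (neg_ne_zero.mpr hx), hq,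
              show q / 2 = m by omega, neg_pow, hu, hmodd.neg_one_pow]
            ring
          obtain ⟨s, hs2⟩ := hxsq
          have hs : s ≠ 0 := by
            rintro rfl; rw [mul_zero] at hs2; exact hx (by linear_combination -hs2)
          have hxne : x ≠ 1 := by
            rintro rfl; rw [one_pow] at hu; exact h2K hu
          refine ⟨(x-1) * s⁻¹, ?_, ?_⟩
          · exact mul_ne_zero (by intro h; apply hxne; linear_combination h) (inv_ne_zero hs)
          · have hxm1 : x ^ (m-1) = -x⁻¹ := by
              field_simp
              rw [hm1x, hu]
            rw [h31, hx2m, hu, hxm1]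
            field_simp
            linear_combination ((x-1)^2) * hs2
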